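/- arXiv:1901.09075 — 8 statements merged into one kernel-verified Lean document; each statement's English description precedes it below -/
import Mathlib

section
/- Let C be a convex set of vertices of a connected bipartite graph G, and let ab be an edge with a ∈ C and b ∉ C. Then every vertex of C is strictly closer to a than to b, i.e., C ⊆ W_ab where W_ab = {x : d(a,x) < d(b,x)}. -/
open SimpleGraph

universe u

variable {V : Type u}

/-- The geodesic interval between two vertices: the set of vertices lying on
shortest paths between them. -/
def gInterval (G : SimpleGraph V) (x y : V) : Set V :=
  {z | G.dist x z + G.dist z y = G.dist x y}

/-- A set of vertices is (geodesically) convex. -/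
def GConvex (G : SimpleGraph V) (C : Set V) : Prop :=
  ∀ x ∈ C, ∀ y ∈ C, gInterval G x y ⊆ C

/-- `Wside G a b` is the set `W_ab` of vertices strictly closer to `a` than to `b`. -/
def Wside (G : SimpleGraph V) (a b : V) : Set V :=
  {x | G.dist a x < G.dist b x}

/-- `Uside G a b` is the set `U_ab` of vertices of `W_ab` having a neighbour in `W_ba`. -/
def Uside (G : SimpleGraph V) (a b : V) : Set V :=
  {x | x ∈ Wside G a b ∧ ∃ y, G.Adj x y ∧ y ∈ Wside G b a}

/-- A graph is bipartite if it admits a proper 2-colouring. -/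
def IsBipartiteGraph (G : SimpleGraph V) : Prop :=
  ∃ c : V → Bool, ∀ u v, G.Adj u v → c u ≠ c v

/-- A partial cube: a connected bipartite graph all of whose half-spaces `W_ab`, `W_ba`
are convex (Djoković's characterization). -/
def IsPartialCube (G : SimpleGraph V) : Prop :=
  G.Connected ∧ IsBipartiteGraph G ∧
    ∀ a b, G.Adj a b → GConvex G (Wside G a b) ∧ GConvex G (Wside G b a)

/-- The Djoković–Winkler relation Θ between (unordered) edges. -/
def ThetaRel (G : SimpleGraph V) (e f : Sym2 V) : Prop :=
  ∃ x y u v : V, e = s(x, y) ∧ f = s(u, v) ∧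
    G.dist x u + G.dist y v ≠ G.dist x v + G.dist y u

/-- The geodesic convex hull of a set of vertices. -/
def gConvexHull (G : SimpleGraph V) (A : Set V) : Set V :=
  ⋂₀ {C : Set V | GConvex G C ∧ A ⊆ C}

private lemma walk_parity {G : SimpleGraph V} (c : V → Bool)
    (hc : ∀ u v, G.Adj u v → c u ≠ c v) :
    ∀ {u v : V} (p : G.Walk u v), (c u = c v) ↔ Even p.length := by
  intro u v p
  induction p with
  | nil => simp
  | @cons u w v h q ih =>
    have h1 := hc _ _ h
    rw [SimpleGraph.Walk.length_cons, Nat.even_add_one, ← ih]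
    revert h1; cases c u <;> cases c w <;> cases c v <;> simp

private lemma dist_parity {G : SimpleGraph V} (hconn : G.Connected)
    (c : V → Bool) (hc : ∀ u v, G.Adj u v → c u ≠ c v) (u v : V) :
    (c u = c v) ↔ Even (G.dist u v) := by
  obtain ⟨p, hp⟩ := hconn.exists_walk_length_eq_dist u v
  rw [← hp]; exact walk_parity c hc p

/-- Every convex set of a connected bipartite graph lies on the `a`-side of any
edge `ab` of its edge-boundary with `a` in the set. -/
theorem stmt_0 (G : SimpleGraph V) (hconn : G.Connected)
    (hbip : IsBipartiteGraph G)
    (C : Set V) (hC : GConvex G C) (a b : V) (hab : G.Adj a b)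
    (haC : a ∈ C) (hbC : b ∉ C) :
    C ⊆ Wside G a b := by
  obtain ⟨c, hc⟩ := hbip
  intro x hx
  have hne : G.dist a x ≠ G.dist b x := by
    intro h
    have h1 := dist_parity hconn c hc a x
    have h2 := dist_parity hconn c hc b x
    have h3 := hc a b hab
    rw [h, ← h2] at h1
    revert h3 h1; cases c a <;> cases c b <;> cases c x <;> simp
  have hdab : G.dist a b = 1 := by rwa [SimpleGraph.dist_eq_one_iff_adj]
  have htri : G.dist a x ≤ G.dist a b + G.dist b x := hconn.dist_triangle
  by_contra hlt
  simp only [Wside, Set.mem_setOf_eq, not_lt] at hlt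
  have hlt' : G.dist b x < G.dist a x := lt_of_le_of_ne hlt (Ne.symm hne)
  have heq : G.dist a b + G.dist b x = G.dist a x := by omega
  have : b ∈ gInterval G a x := heq
  exact hbC (hC a haC x hx this)
end

section
/- Let G be a partial cube, x,y two vertices, P a shortest (x,y)-path and W any (x,y)-path of G. Then each edge of P is Θ-equivalent to some edge of W. -/
open SimpleGraph

universe u

variable {V : Type u}

lemma parity_lemma (G : SimpleGraph V) (c : V → Bool)
    (hc : ∀ u v, G.Adj u v → c u ≠ c v) :
    ∀ {u v : V} (p : G.Walk u v), (c u = c v ↔ Even p.length) := by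
  intro u v p
  induction p with
  | nil => simp
  | @cons a b w h p IH =>
    have := hc _ _ h
    simp only [Walk.length_cons, Nat.even_add_one, ← IH]
    revert this
    cases cb : c a <;> cases cw : c b <;> cases cv : c w <;> simp_all

lemma dart_geodesic (G : SimpleGraph V) (hc : G.Connected) :
    ∀ {x y : V} (P : G.Walk x y), P.length = G.dist x y →
      ∀ d ∈ P.darts, G.dist x d.fst + 1 + G.dist d.snd y = G.dist x y := by
  intro x y P
  induction P with
  | nil => simp
  | @cons a b w h p IH =>
    intro hlen d hd
    have hlb : G.dist b w ≤ p.length := dist_le p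
    have hub : G.dist a w ≤ 1 + G.dist b w := by
      obtain ⟨q, hq⟩ := (hc b w).exists_walk_length_eq_dist
      have := dist_le (Walk.cons h q)
      simpa [hq, Nat.add_comm] using this
    have hplen : p.length = G.dist b w := by
      simp only [Walk.length_cons] at hlen
      omega
    rw [Walk.darts_cons] at hd
    rcases List.mem_cons.mp hd with rfl | hd
    · simp only [SimpleGraph.dist_self]
      simp only [Walk.length_cons, hplen] at hlen
      omega
    · have := IH hplen d hd
      have h1 : G.dist a d.fst ≤ 1 + G.dist b d.fst := by
        obtain ⟨q, hq⟩ := (hc b d.fst).exists_walk_length_eq_dist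
        have := dist_le (Walk.cons h q)
        simpa [hq, Nat.add_comm] using this
      have h2 : G.dist a w ≤ G.dist a d.fst + (1 + G.dist d.snd w) := by
        have htr := hc.dist_triangle (u := a) (v := d.fst) (w := w)
        have h3 : G.dist d.fst w ≤ 1 + G.dist d.snd w := by
          obtain ⟨q, hq⟩ := (hc d.snd w).exists_walk_length_eq_dist
          have := dist_le (Walk.cons d.adj q)
          simpa [hq, Nat.add_comm] using this
        omega
      simp only [Walk.length_cons, hplen] at hlen
      omega

lemma crossing (G : SimpleGraph V) :
    ∀ {x y : V} (W : G.Walk x y) (S : Set V), x ∈ S → y ∉ S →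
      ∃ d ∈ W.darts, d.fst ∈ S ∧ d.snd ∉ S := by
  intro x y W
  induction W with
  | nil => intro S hx hy; exact absurd hx hy
  | @cons a b w h p IH =>
    intro S hx hy
    by_cases hb : b ∈ S
    · obtain ⟨d, hd, h1, h2⟩ := IH S hb hy
      exact ⟨d, by simp [Walk.darts_cons, hd], h1, h2⟩
    · exact ⟨⟨(a, b), h⟩, by simp [Walk.darts_cons], hx, hb⟩

/-- If `P` is a geodesic and `W` any path with the same endpoints in a partial
cube, then every edge of `P` is Θ-equivalent to some edge of `W`. -/
theorem stmt_3 (G : SimpleGraph V) (hG : IsPartialCube G) (x y : V)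
    (P W : G.Walk x y) (hP : P.length = G.dist x y) (hW : W.IsPath) :
    ∀ e ∈ P.edges, ∃ f ∈ W.edges, ThetaRel G e f := by
  obtain ⟨hconn, ⟨c, hc⟩, -⟩ := hG
  have hne : ∀ {a b : V}, G.Adj a b → ∀ z, G.dist a z ≠ G.dist b z := by
    intro a b hab z
    obtain ⟨p, hp⟩ := (hconn a z).exists_walk_length_eq_dist
    obtain ⟨q, hq⟩ := (hconn b z).exists_walk_length_eq_dist
    have h1 := parity_lemma G c hc p
    have h2 := parity_lemma G c hc q
    rw [hp] at h1; rw [hq] at h2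
    intro hEq
    rw [hEq] at h1
    have h3 := h1.trans h2.symm
    refine hc _ _ hab ?_
    cases hca : c a <;> cases hcb : c b <;> cases hcz : c z <;> simp_all
  intro e he
  rw [Walk.edges, List.mem_map] at he
  obtain ⟨d, hd, rfl⟩ := he
  set a := d.fst with ha
  set b := d.snd with hb
  have hab : G.Adj a b := d.adj
  have hkey : G.dist x a + 1 + G.dist b y = G.dist x y :=
    dart_geodesic G hconn P hP d hd
  have hxa : x ∈ Wside G a b := by
    have htr := hconn.dist_triangle (u := x) (v := b) (w := y)
    have : G.dist x a + 1 ≤ G.dist x b := by omega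
    show G.dist a x < G.dist b x
    rw [@dist_comm _ G a x, @dist_comm _ G b x]
    omega
  have hya : y ∉ Wside G a b := by
    have htr := hconn.dist_triangle (u := x) (v := a) (w := y)
    simp only [Wside, Set.mem_setOf_eq]
    omega
  obtain ⟨f, hf, hfu, hfv⟩ := crossing G W (Wside G a b) hxa hya
  refine ⟨f.edge, ?_, a, b, f.fst, f.snd, ?_, ?_, ?_⟩
  · exact List.mem_map_of_mem hf
  · rfl
  · rfl
  · have h1 : G.dist a f.fst < G.dist b f.fst := hfu
    have h2 : ¬ G.dist a f.snd < G.dist b f.snd := hfv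
    have h3 := hne hab f.snd
    omega
end

section
/- Every shortest cycle of a partial cube is a convex subgraph. -/
open SimpleGraph

universe u

variable {V : Type u}

namespace PCaux

variable {G : SimpleGraph V}

lemma support_eq_map_getVert {u v : V} (p : G.Walk u v) :
    p.support = (List.range (p.length + 1)).map p.getVert := by
  induction p with
  | nil => simp [Walk.getVert]
  | cons h q ih =>
    rw [Walk.support_cons, ih, Walk.length_cons]
    conv_rhs => rw [List.range_succ_eq_map, List.map_cons, List.map_map]
    have h2 : (Walk.cons h q).getVert ∘ Nat.succ = q.getVert :=
      funext fun k => Walk.getVert_cons_succ q h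
    rw [h2, Walk.getVert_zero]

lemma getVert_mem_support {u v : V} (p : G.Walk u v) (i : ℕ) : p.getVert i ∈ p.support := by
  rcases le_or_gt i p.length with h | h
  · rw [support_eq_map_getVert]
    exact List.mem_map_of_mem (List.mem_range.mpr (by omega))
  · rw [p.getVert_of_length_le h.le]
    exact p.end_mem_support

lemma cycle_getVert_inj {x : V} {C : G.Walk x x} (hC : C.IsCycle) :
    ∀ i j, 1 ≤ i → i ≤ C.length → 1 ≤ j → j ≤ C.length →
      C.getVert i = C.getVert j → i = j := by
  have hnd := hC.support_nodup
  rw [support_eq_map_getVert, List.range_succ_eq_map, List.map_cons, List.tail_cons,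
    List.map_map] at hnd
  intro i j hi1 hin hj1 hjn hij
  have key := List.inj_on_of_nodup_map hnd (x := i - 1) (y := j - 1)
    (List.mem_range.mpr (by omega)) (List.mem_range.mpr (by omega))
  have hfi : (C.getVert ∘ Nat.succ) (i - 1) = (C.getVert ∘ Nat.succ) (j - 1) := by
    simp only [Function.comp_apply]
    rw [show Nat.succ (i-1) = i from by omega, show Nat.succ (j-1) = j from by omega]
    exact hij
  have := key hfi
  omega

lemma exists_arc {u v : V} (p : G.Walk u v) :
    ∀ i, i ≤ p.length → ∃ A : G.Walk u (p.getVert i), A.length = i ∧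
      A.support = (List.range (i + 1)).map p.getVert := by
  intro i
  induction i with
  | zero =>
    intro _
    refine ⟨(SimpleGraph.Walk.nil).copy rfl (p.getVert_zero).symm, by simp, ?_⟩
    rw [Walk.support_copy, Walk.support_nil]
    simp [List.range_succ, Walk.getVert_zero]
  | succ i ih =>
    intro hi
    obtain ⟨A, hl, hs⟩ := ih (by omega)
    refine ⟨A.concat (p.adj_getVert_succ (by omega)), ?_, ?_⟩
    · rw [Walk.length_concat, hl]
    · rw [Walk.support_concat, hs]
      conv_rhs => rw [List.range_succ, List.map_append]
      simp

lemma geodesic_support_mem (hconn : G.Connected) {u v : V} (p : G.Walk u v)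
    (hp : p.length = G.dist u v) {z : V} (hz : z ∈ p.support) :
    G.dist u z + G.dist z v = G.dist u v := by
  haveI := Classical.decEq V
  have h1 := SimpleGraph.dist_le (p.takeUntil z hz)
  have h2 := SimpleGraph.dist_le (p.dropUntil z hz)
  have h3 : (p.takeUntil z hz).length + (p.dropUntil z hz).length = p.length := by
    rw [← Walk.length_append, Walk.take_spec]
  have h4 := hconn.dist_triangle (u := u) (v := z) (w := v)
  omega

lemma exists_geodesic_path (hconn : G.Connected) (u v : V) :
    ∃ p : G.Walk u v, p.IsPath ∧ p.length = G.dist u v := by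
  haveI := Classical.decEq V
  obtain ⟨q, hq⟩ := hconn.exists_walk_length_eq_dist u v
  refine ⟨q.bypass, q.bypass_isPath, ?_⟩
  have h1 := q.length_bypass_le
  have h2 := SimpleGraph.dist_le q.bypass
  omega

lemma walk_parity {col : V → Bool} (hcol : ∀ u v, G.Adj u v → col u ≠ col v) :
    ∀ {u v : V} (p : G.Walk u v), (col u = col v) ↔ Even p.length := by
  intro u v p
  induction p with
  | nil => simp
  | @cons a b c h q ih =>
    rw [Walk.length_cons, Nat.even_add_one, ← ih]
    have := hcol a b h
    cases hab : col a <;> cases hbc : col b <;> cases hcc : col c <;> simp_all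

lemma dist_parity_ne (hconn : G.Connected) {col : V → Bool}
    (hcol : ∀ u v, G.Adj u v → col u ≠ col v) {x w : V} (hadj : G.Adj x w) (u : V) :
    G.dist x u ≠ G.dist w u := by
  obtain ⟨P, hP⟩ := hconn.exists_walk_length_eq_dist x u
  obtain ⟨Q, hQ⟩ := hconn.exists_walk_length_eq_dist w u
  intro h
  have h1 := walk_parity hcol P
  have h2 := walk_parity hcol Q
  rw [hP] at h1
  rw [hQ] at h2
  rw [h] at h1
  have h4 : (col x = col u) ↔ (col w = col u) := h1.trans h2.symm
  have h3 := hcol x w hadj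
  revert h3 h4
  cases col x <;> cases col w <;> cases col u <;> simp

lemma mem_support_rotate [DecidableEq V] {x0 x : V} (C : G.Walk x0 x0) (hx : x ∈ C.support)
    (z : V) : z ∈ (C.rotate x hx).support ↔ z ∈ C.support := by
  simp only [Walk.rotate]
  rw [Walk.mem_support_append_iff, or_comm, ← Walk.mem_support_append_iff, Walk.take_spec]

lemma length_rotate [DecidableEq V] {x0 x : V} (C : G.Walk x0 x0) (hx : x ∈ C.support) :
    (C.rotate x hx).length = C.length := by
  simp only [Walk.rotate]
  rw [Walk.length_append, Nat.add_comm, ← Walk.length_append, Walk.take_spec]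


lemma key {x w : V} (hconn : G.Connected) (hadj : G.Adj x w)
    (hcvx : GConvex G (Wside G w x))
    {W : G.Walk x x}
    (hinj : ∀ i j, 1 ≤ i → i ≤ W.length → 1 ≤ j → j ≤ W.length →
      W.getVert i = W.getVert j → i = j)
    (hmin : ∀ (z : V) (D : G.Walk z z), D.IsCycle → W.length ≤ D.length)
    (hw : w ∉ W.support)
    {p : ℕ} (hp : p ≤ W.length) (hcp : W.getVert p ∈ Wside G w x)
    (hprev : ∀ j < p, W.getVert j ∈ Wside G x w) :
    W.length ≤ 2 * p := by
  have hcp' : G.dist w (W.getVert p) < G.dist x (W.getVert p) := hcp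
  have hdxw : G.dist x w = 1 := dist_eq_one_iff_adj.mpr hadj
  have hdwx : G.dist w x = 1 := by rw [SimpleGraph.dist_comm]; exact hdxw
  have hxself : G.dist x x = 0 := SimpleGraph.dist_self
  have hp0 : p ≠ 0 := by
    intro h
    rw [h, Walk.getVert_zero] at hcp'
    omega
  have hpn : p ≠ W.length := by
    intro h
    rw [h, Walk.getVert_length] at hcp'
    omega
  have hplt : p < W.length := by omega
  have hp1 : 1 ≤ p := by omega
  obtain ⟨A, hAl, hAs⟩ := exists_arc W p hp
  have hdle : G.dist x (W.getVert p) ≤ p := by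
    have := SimpleGraph.dist_le A
    omega
  have hdw : G.dist w (W.getVert p) + 1 = G.dist x (W.getVert p) := by
    have h1 : G.dist x (W.getVert p) ≤ G.dist x w + G.dist w (W.getVert p) :=
      hconn.dist_triangle
    omega
  obtain ⟨Q, hQpath, hQl⟩ := exists_geodesic_path hconn (W.getVert p) w
  have hwmem : w ∈ Wside G w x := by
    show G.dist w w < G.dist x w
    rw [SimpleGraph.dist_self, hdxw]
    omega
  have hQside : ∀ z ∈ Q.support, z ∈ Wside G w x := by
    intro z hz
    have hzint : z ∈ gInterval G (W.getVert p) w :=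
      geodesic_support_mem hconn Q hQl hz
    exact hcvx _ hcp w hwmem hzint
  have hAmem : ∀ z ∈ A.support, ∃ j, j ≤ p ∧ W.getVert j = z := by
    intro z hzmem
    rw [hAs] at hzmem
    obtain ⟨j, hj, rfl⟩ := List.mem_map.mp hzmem
    exact ⟨j, by have := List.mem_range.mp hj; omega, rfl⟩
  have hApath : A.support.Nodup := by
    rw [hAs]
    refine List.Nodup.map_on ?_ List.nodup_range
    intro i hi j hj hij
    rw [List.mem_range] at hi hj
    rcases Nat.eq_zero_or_pos i with rfl | hi1 <;> rcases Nat.eq_zero_or_pos j with hj0 | hj1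
    · omega
    · exfalso
      have hxn : W.getVert j = W.getVert W.length := by
        rw [← hij, Walk.getVert_zero, Walk.getVert_length]
      have := hinj j W.length hj1 (by omega) (by omega) le_rfl hxn
      omega
    · exfalso
      subst hj0
      have hxn : W.getVert i = W.getVert W.length := by
        rw [hij, Walk.getVert_zero, Walk.getVert_length]
      have := hinj i W.length hi1 (by omega) (by omega) le_rfl hxn
      omega
    · exact hinj i j hi1 (by omega) hj1 (by omega) hij
  have hQsup := hQpath.support_nodup
  rw [Walk.support_eq_cons, List.nodup_cons] at hQsup
  have hnodup : ((A.append Q).support).Nodup := by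
    rw [Walk.support_append]
    refine List.Nodup.append hApath hQsup.2 ?_
    intro z hzA hzQ
    obtain ⟨j, hjp, rfl⟩ := hAmem z hzA
    rcases Nat.lt_or_ge j p with hlt | hge
    · have h1 : G.dist x (W.getVert j) < G.dist w (W.getVert j) := hprev j hlt
      have h2 : G.dist w (W.getVert j) < G.dist x (W.getVert j) :=
        hQside _ (List.mem_of_mem_tail hzQ)
      omega
    · have : j = p := by omega
      subst this
      exact hQsup.1 hzQ
  have hedge : s(w, x) ∉ (A.append Q).edges := by
    rw [Walk.edges_append, List.mem_append]
    rintro (h | h)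
    · have hwA : w ∈ A.support := Walk.fst_mem_support_of_mem_edges A h
      obtain ⟨j, _, hj⟩ := hAmem w hwA
      exact hw (hj ▸ getVert_mem_support W j)
    · have hxQ : x ∈ Q.support := Walk.snd_mem_support_of_mem_edges Q h
      have h1 : G.dist w x < G.dist x x := hQside x hxQ
      omega
  have hD : (Walk.cons hadj.symm (A.append Q)).IsCycle :=
    (Walk.cons_isCycle_iff (A.append Q) hadj.symm).mpr ⟨(Walk.isPath_def _).mpr hnodup, hedge⟩
  have hlenD := hmin w _ hD
  rw [Walk.length_cons, Walk.length_append, hAl, hQl] at hlenD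
  have hcm : G.dist (W.getVert p) w = G.dist w (W.getVert p) := SimpleGraph.dist_comm
  omega


lemma step (hG : IsPartialCube G) {x0 : V} {C : G.Walk x0 x0} (hC : C.IsCycle)
    (hmin : ∀ (z : V) (D : G.Walk z z), D.IsCycle → C.length ≤ D.length)
    {x y w : V} (hx : x ∈ C.support) (hy : y ∈ C.support)
    (hadj : G.Adj x w) (hd : G.dist w y + 1 = G.dist x y) :
    w ∈ C.support := by
  classical
  obtain ⟨hconn, ⟨col, hcol⟩, hcvx⟩ := hG
  by_contra hw
  set W := C.rotate x hx with hWdef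
  have hWc : W.IsCycle := hC.rotate hx
  have hWlen : W.length = C.length := length_rotate C hx
  have hmin' : ∀ (z : V) (D : G.Walk z z), D.IsCycle → W.length ≤ D.length :=
    fun z D hD => hWlen ▸ hmin z D hD
  have hn3 : 3 ≤ W.length := hWc.three_le_length
  set n := W.length with hn
  have hinj := cycle_getVert_inj hWc
  have hwW : w ∉ W.support := fun hmem => hw ((mem_support_rotate C hx w).mp hmem)
  have tot : ∀ u : V, u ∈ Wside G x w ∨ u ∈ Wside G w x := by
    intro u
    have := dist_parity_ne hconn hcol hadj u
    rcases lt_or_gt_of_ne this with h | h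
    · exact Or.inl h
    · exact Or.inr h
  -- index of y
  have hyW : y ∈ W.support := (mem_support_rotate C hx y).mpr hy
  obtain ⟨iy, hiyn, hiyv⟩ : ∃ i, i ≤ n ∧ W.getVert i = y := by
    rw [support_eq_map_getVert] at hyW
    obtain ⟨i, hi, hv⟩ := List.mem_map.mp hyW
    exact ⟨i, by have := List.mem_range.mp hi; omega, hv⟩
  have hyside : y ∈ Wside G w x := by
    show G.dist w y < G.dist x y
    omega
  have hex : ∃ i, i ≤ n ∧ W.getVert i ∈ Wside G w x := ⟨iy, hiyn, hiyv ▸ hyside⟩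
  set p := Nat.find hex with hpdef
  have hpspec := Nat.find_spec hex
  have hple : p ≤ n := hpspec.1
  have hkey1 : n ≤ 2 * p := by
    refine key hconn hadj (hcvx x w hadj).2 hinj hmin' hwW hple hpspec.2 ?_
    intro j hj
    refine (tot _).resolve_right fun hmem => ?_
    exact Nat.find_min hex hj ⟨by omega, hmem⟩
  -- the reversed cycle
  set R := W.reverse with hRdef
  have hRlen : R.length = n := Walk.length_reverse _
  have hRget : ∀ i, R.getVert i = W.getVert (n - i) := fun i => Walk.getVert_reverse W i
  have hinjR : ∀ i j, 1 ≤ i → i ≤ R.length → 1 ≤ j → j ≤ R.length →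
      R.getVert i = R.getVert j → i = j := by
    intro i j hi1 hi2 hj1 hj2 hij
    rw [hRlen] at hi2 hj2
    rw [hRget, hRget] at hij
    by_cases hi0 : i = n
    · by_cases hj0 : j = n
      · omega
      · exfalso
        have h1 : W.getVert (n - i) = W.getVert n := by
          rw [hi0, Nat.sub_self, Walk.getVert_zero, Walk.getVert_length]
        have h2 : W.getVert (n - j) = W.getVert n := by rw [← hij, h1]
        have := hinj (n - j) n (by omega) (by omega) (by omega) le_rfl h2
        omega
    · by_cases hj0 : j = n
      · exfalso
        have h1 : W.getVert (n - j) = W.getVert n := by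
          rw [hj0, Nat.sub_self, Walk.getVert_zero, Walk.getVert_length]
        have h2 : W.getVert (n - i) = W.getVert n := by rw [hij, h1]
        have := hinj (n - i) n (by omega) (by omega) (by omega) le_rfl h2
        omega
      · have := hinj (n - i) (n - j) (by omega) (by omega) (by omega) (by omega) hij
        omega
  have hminR : ∀ (z : V) (D : G.Walk z z), D.IsCycle → R.length ≤ D.length :=
    fun z D hD => hRlen ▸ hmin' z D hD
  have hwR : w ∉ R.support := by
    rw [hRdef, Walk.support_reverse, List.mem_reverse]
    exact hwW
  have hexR : ∃ i, i ≤ R.length ∧ R.getVert i ∈ Wside G w x := by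
    refine ⟨n - iy, by omega, ?_⟩
    rw [hRget, show n - (n - iy) = iy from by omega, hiyv]
    exact hyside
  set r := Nat.find hexR with hrdef
  have hrspec := Nat.find_spec hexR
  have hkey2 : n ≤ 2 * r := by
    have := key hconn hadj (hcvx x w hadj).2 hinjR hminR hwR hrspec.1 hrspec.2 ?_
    · omega
    · intro j hj
      refine (tot _).resolve_right fun hmem => ?_
      exact Nat.find_min hexR hj ⟨by omega, hmem⟩
  -- every index on the w-side equals p
  have hq : ∀ j, j ≤ n → W.getVert j ∈ Wside G w x → j = p := by
    intro j hj hjmem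
    have h1 : p ≤ j := Nat.find_min' hex ⟨hj, hjmem⟩
    have h2 : r ≤ n - j := by
      refine Nat.find_min' hexR ⟨by omega, ?_⟩
      rw [hRget, show n - (n - j) = j from by omega]
      exact hjmem
    omega
  have hrnp : r ≤ n - p := by
    refine Nat.find_min' hexR ⟨by omega, ?_⟩
    rw [hRget, show n - (n - p) = p from by omega]
    exact hpspec.2
  have hn2p : n = 2 * p := by omega
  have hp2 : 2 ≤ p := by omega
  -- the two neighbours of getVert p on the cycle
  have ha : W.getVert (p - 1) ∈ Wside G x w := by
    refine (tot _).resolve_right fun hmem => ?_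
    have := hq (p - 1) (by omega) hmem
    omega
  have hb : W.getVert (p + 1) ∈ Wside G x w := by
    refine (tot _).resolve_right fun hmem => ?_
    have := hq (p + 1) (by omega) hmem
    omega
  have hadj1 : G.Adj (W.getVert (p - 1)) (W.getVert p) := by
    have := W.adj_getVert_succ (i := p - 1) (by omega)
    rwa [show p - 1 + 1 = p from by omega] at this
  have hadj2 : G.Adj (W.getVert p) (W.getVert (p + 1)) := W.adj_getVert_succ (by omega)
  have hne : W.getVert (p - 1) ≠ W.getVert (p + 1) := by
    intro h
    have := hinj (p - 1) (p + 1) (by omega) (by omega) (by omega) (by omega) h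
    omega
  have hnadj : ¬ G.Adj (W.getVert (p - 1)) (W.getVert (p + 1)) := by
    intro h
    have h1 := hcol _ _ hadj1
    have h2 := hcol _ _ hadj2
    have h3 := hcol _ _ h
    revert h1 h2 h3
    cases col (W.getVert (p - 1)) <;> cases col (W.getVert p) <;>
      cases col (W.getVert (p + 1)) <;> simp
  have hd1 : G.dist (W.getVert (p - 1)) (W.getVert p) = 1 := dist_eq_one_iff_adj.mpr hadj1
  have hd2 : G.dist (W.getVert p) (W.getVert (p + 1)) = 1 := dist_eq_one_iff_adj.mpr hadj2
  have hdab : G.dist (W.getVert (p - 1)) (W.getVert (p + 1)) = 2 := by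
    have hle : G.dist (W.getVert (p - 1)) (W.getVert (p + 1)) ≤ 2 := by
      have := hconn.dist_triangle (u := W.getVert (p - 1)) (v := W.getVert p)
        (w := W.getVert (p + 1))
      omega
    have h0 : G.dist (W.getVert (p - 1)) (W.getVert (p + 1)) ≠ 0 := by
      intro h
      exact hne (hconn.dist_eq_zero_iff.mp h)
    have h1 : G.dist (W.getVert (p - 1)) (W.getVert (p + 1)) ≠ 1 := by
      intro h
      exact hnadj (dist_eq_one_iff_adj.mp h)
    omega
  have hmid : W.getVert p ∈ gInterval G (W.getVert (p - 1)) (W.getVert (p + 1)) := by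
    show G.dist (W.getVert (p - 1)) (W.getVert p) + G.dist (W.getVert p) (W.getVert (p + 1)) =
      G.dist (W.getVert (p - 1)) (W.getVert (p + 1))
    omega
  have hfin : W.getVert p ∈ Wside G x w := (hcvx x w hadj).1 _ ha _ hb hmid
  have hfin' : G.dist x (W.getVert p) < G.dist w (W.getVert p) := hfin
  have hopp : G.dist w (W.getVert p) < G.dist x (W.getVert p) := hpspec.2
  omega


end PCaux

/-- Every shortest cycle of a partial cube is convex. -/
theorem stmt_6 (G : SimpleGraph V) (hG : IsPartialCube G) (x : V)
    (C : G.Walk x x) (hC : C.IsCycle)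
    (hmin : ∀ (y : V) (D : G.Walk y y), D.IsCycle → C.length ≤ D.length) :
    GConvex G {v | v ∈ C.support} := by
  intro a ha b hb z hz
  simp only [Set.mem_setOf_eq] at ha hb ⊢
  have hz' : G.dist a z + G.dist z b = G.dist a b := hz
  clear hz
  have hconn := hG.1
  have main : ∀ d : ℕ, ∀ a b z : V, a ∈ C.support → b ∈ C.support →
      G.dist a b = d → G.dist a z + G.dist z b = d → z ∈ C.support := by
    intro d
    induction d using Nat.strong_induction_on with
    | _ d ih =>
      intro a b z ha hb hab hz
      rcases Nat.eq_zero_or_pos (G.dist a z) with h0 | hpos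
      · have haz : a = z := hconn.dist_eq_zero_iff.mp h0
        rwa [← haz]
      · obtain ⟨P, hPp, hPl⟩ := PCaux.exists_geodesic_path hconn a z
        have hPlen : 0 < P.length := by omega
        have hadj : G.Adj a (P.getVert 1) := by
          have := P.adj_getVert_succ (i := 0) hPlen
          rwa [P.getVert_zero] at this
        set w := P.getVert 1 with hwdef
        have hnN : ¬ P.Nil := by
          rw [Walk.not_nil_iff_lt_length]
          omega
        have hdaw : G.dist a w = 1 := dist_eq_one_iff_adj.mpr hadj
        have hdwz : G.dist w z + 1 = G.dist a z := by
          have h1 : G.dist w z ≤ P.tail.length := SimpleGraph.dist_le P.tail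
          have h2 : P.tail.length + 1 = P.length := Walk.length_tail_add_one hnN
          have h3 : G.dist a z ≤ G.dist a w + G.dist w z := hconn.dist_triangle
          omega
        have hdwb : G.dist w b + 1 = d := by
          have h1 : G.dist w b ≤ G.dist w z + G.dist z b := hconn.dist_triangle
          have h2 : G.dist a b ≤ G.dist a w + G.dist w b := hconn.dist_triangle
          omega
        have hwmem : w ∈ C.support :=
          PCaux.step hG hC hmin ha hb hadj (by omega)
        exact ih (d - 1) (by omega) w b z hwmem hb (by omega) (by omega)
  exact main (G.dist a b) a b z ha hb rfl hz'
end

section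
/- Let H be a connected subgraph of a partial cube G. Then every edge of the convex hull of H is Θ-equivalent to some edge of H. -/
open SimpleGraph

universe u

variable {V : Type u}

/-- Every edge of the convex hull of a connected subgraph `H` of a partial cube
is Θ-equivalent to some edge of `H`. -/
theorem stmt_8 (G : SimpleGraph V) (hG : IsPartialCube G) (H : G.Subgraph)
    (hH : H.Connected) (x y : V) (hxy : G.Adj x y)
    (hx : x ∈ gConvexHull G H.verts) (hy : y ∈ gConvexHull G H.verts) :
    ∃ u v, H.Adj u v ∧ ThetaRel G s(x, y) s(u, v) := by

  obtain ⟨hconn, ⟨c, hc⟩, hconv⟩ := hG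
  -- parity lemma for walks
  have walk_parity : ∀ {u v : V} (p : G.Walk u v), (c u = c v) ↔ Even p.length := by
    intro u v p
    induction p with
    | nil => simp
    | @cons a b v h p ih =>
      have hab := hc a b h
      simp only [SimpleGraph.Walk.length_cons, Nat.even_add_one, ← ih]
      cases hcb : c b <;> cases hca : c a <;> cases hcv : c v <;> simp_all
  have reach : ∀ u v : V, G.Reachable u v := hconn.preconnected
  -- adjacent vertices have different distances to any point
  have parity : ∀ {a b : V}, G.Adj a b → ∀ u, G.dist a u ≠ G.dist b u := by
    intro a b hab u heq
    obtain ⟨p, hp⟩ := (reach a u).exists_walk_length_eq_dist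
    obtain ⟨q, hq⟩ := (reach b u).exists_walk_length_eq_dist
    have h1 := (walk_parity p).symm
    have h2 := (walk_parity q).symm
    rw [hp] at h1; rw [hq] at h2
    rw [heq] at h1
    have : c a = c b := by
      cases hca : c a <;> cases hcb : c b <;> cases hcu : c u <;> simp_all
    exact hc a b hab this
  have cover : ∀ u, u ∈ Wside G x y ∨ u ∈ Wside G y x := by
    intro u
    rcases lt_trichotomy (G.dist x u) (G.dist y u) with h | h | h
    · exact Or.inl h
    · exact absurd h (parity hxy u)
    · exact Or.inr h
  have hdxy : G.dist x y = 1 := SimpleGraph.dist_eq_one_iff_adj.mpr hxy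
  -- a crossing edge gives the Theta relation
  have cross : ∀ u v : V, G.Adj u v → u ∈ Wside G x y → v ∈ Wside G y x →
      ThetaRel G s(x, y) s(u, v) := by
    intro u v huv hu hv
    refine ⟨x, y, u, v, rfl, rfl, ?_⟩
    have hdyu : G.dist y u ≤ 1 + G.dist x u := by
      calc G.dist y u ≤ G.dist y x + G.dist x u := hconn.dist_triangle
        _ = 1 + G.dist x u := by rw [SimpleGraph.dist_comm, hdxy]
    have hdxv : G.dist x v ≤ 1 + G.dist y v := by
      calc G.dist x v ≤ G.dist x y + G.dist y v := hconn.dist_triangle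
        _ = 1 + G.dist y v := by rw [hdxy]
    have h1 : G.dist x u < G.dist y u := hu
    have h2 : G.dist y v < G.dist x v := hv
    omega
  by_contra hcon
  push_neg at hcon
  -- no edge of H crosses the cut
  have nocross : ∀ u v : V, H.Adj u v → ¬(u ∈ Wside G x y ∧ v ∈ Wside G y x) := by
    rintro u v huv ⟨hu, hv⟩
    exact hcon u v huv (cross u v (huv.adj_sub) hu hv)
  -- hence along any walk in H, the side is preserved
  have stepS : ∀ u v : V, H.Adj u v → u ∈ Wside G x y → v ∈ Wside G x y := by
    intro u v huv hu
    rcases cover v with h | h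
    · exact h
    · exact absurd ⟨hu, h⟩ (nocross u v huv)
  have stepT : ∀ u v : V, H.Adj u v → u ∈ Wside G y x → v ∈ Wside G y x := by
    intro u v huv hu
    rcases cover v with h | h
    · exact absurd ⟨h, hu⟩ (nocross v u huv.symm)
    · exact h
  obtain ⟨w0, hw0⟩ := hH.nonempty
  have walkS : ∀ {a b : H.verts} (p : H.coe.Walk a b),
      (a : V) ∈ Wside G x y → (b : V) ∈ Wside G x y := by
    intro a b p
    induction p with
    | nil => exact id
    | @cons a m b h p ih => exact fun ha => ih (stepS a m h ha)
  have walkT : ∀ {a b : H.verts} (p : H.coe.Walk a b),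
      (a : V) ∈ Wside G y x → (b : V) ∈ Wside G y x := by
    intro a b p
    induction p with
    | nil => exact id
    | @cons a m b h p ih => exact fun ha => ih (stepT a m h ha)
  -- x is always in W_xy, y in W_yx
  have hxS : x ∈ Wside G x y := by
    show G.dist x x < G.dist y x
    rw [SimpleGraph.dist_self, SimpleGraph.dist_comm, hdxy]; omega
  have hyT : y ∈ Wside G y x := by
    show G.dist y y < G.dist x y
    rw [SimpleGraph.dist_self, hdxy]; omega
  rcases cover w0 with hS | hT
  · -- all of H.verts in W_xy, convex, so hull ⊆ W_xy, contradicting y ∈ W_yx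
    have hsub : H.verts ⊆ Wside G x y := by
      intro v hv
      obtain ⟨p⟩ := hH.preconnected ⟨w0, hw0⟩ ⟨v, hv⟩
      exact walkS p hS
    have h1 : G.dist x y < G.dist y y := hy _ ⟨(hconv x y hxy).1, hsub⟩
    have h2 : G.dist y y < G.dist x y := hyT
    omega
  · have hsub : H.verts ⊆ Wside G y x := by
      intro v hv
      obtain ⟨p⟩ := hH.preconnected ⟨w0, hw0⟩ ⟨v, hv⟩
      exact walkT p hT
    have h1 : G.dist y x < G.dist x x := hx _ ⟨(hconv x y hxy).2, hsub⟩
    have h2 : G.dist x x < G.dist y x := hxS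
    omega
end

section
/- Let H be a subgraph of a partial cube G such that every edge of G is Θ-equivalent to an edge of H. Then the convex hull of H is all of G. -/
open SimpleGraph

universe u

variable {V : Type u}

lemma color_parity {G : SimpleGraph V} {c : V → Bool}
    (hc : ∀ u v, G.Adj u v → c u ≠ c v) {a b : V} (p : G.Walk a b) :
    (c a = c b) ↔ Even p.length := by
  induction p with
  | nil => simp
  | cons hadj p ih =>
    rename_i x y z
    have hxy := hc _ _ hadj
    simp only [Walk.length_cons, Nat.even_add_one, ← ih]
    cases hx : c x <;> cases hy : c y <;> cases hz : c z <;> simp_all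

lemma dist_ne {G : SimpleGraph V} (hconn : G.Connected)
    {c : V → Bool} (hc : ∀ u v, G.Adj u v → c u ≠ c v)
    {x y : V} (hxy : G.Adj x y) (z : V) : G.dist x z ≠ G.dist y z := by
  obtain ⟨p, hp⟩ := ((hconn x z)).exists_walk_length_eq_dist
  obtain ⟨q, hq⟩ := ((hconn y z)).exists_walk_length_eq_dist
  have h1 : (c x = c z) ↔ Even (G.dist x z) := hp ▸ color_parity hc p
  have h2 : (c y = c z) ↔ Even (G.dist y z) := hq ▸ color_parity hc q
  have := hc _ _ hxy
  intro he
  rw [he] at h1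
  cases hx : c x <;> cases hy : c y <;> cases hz : c z <;>
    simp_all [Nat.even_iff, Nat.odd_iff]

/-- For adjacent x y, distances to any z differ by exactly one. -/
lemma dist_dichotomy {G : SimpleGraph V} (hconn : G.Connected)
    {c : V → Bool} (hc : ∀ u v, G.Adj u v → c u ≠ c v)
    {x y : V} (hxy : G.Adj x y) (z : V) :
    G.dist y z = G.dist x z + 1 ∨ G.dist x z = G.dist y z + 1 := by
  have h1 : G.dist y z ≤ G.dist y x + G.dist x z := hconn.dist_triangle
  have h2 : G.dist x z ≤ G.dist x y + G.dist y z := hconn.dist_triangle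
  have hd1 : G.dist x y = 1 := dist_eq_one_iff_adj.mpr hxy
  have hd2 : G.dist y x = 1 := dist_eq_one_iff_adj.mpr hxy.symm
  have hne := dist_ne hconn hc hxy z
  omega

/-- If every edge of a partial cube `G` is Θ-equivalent to an edge of a subgraph
`H`, then the convex hull of `H` is all of `G`. -/
theorem stmt_9 (G : SimpleGraph V) (hG : IsPartialCube G) (H : G.Subgraph)
    (hne : H.verts.Nonempty)
    (h : ∀ x y, G.Adj x y → ∃ u v, H.Adj u v ∧ ThetaRel G s(x, y) s(u, v)) :
    gConvexHull G H.verts = Set.univ := by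
  obtain ⟨hconn, ⟨c, hc⟩, -⟩ := hG
  set C := gConvexHull G H.verts with hC
  have hsub : H.verts ⊆ C := fun z hz C' hC' => hC'.2 hz
  have hconv : GConvex G C := by
    intro a ha b hb z hz C' hC'
    exact hC'.1 a (ha C' hC') b (hb C' hC') hz
  -- key step: C is closed under adjacency
  have step : ∀ x y, x ∈ C → G.Adj x y → y ∈ C := by
    intro x y hx hxy
    obtain ⟨u, v, huv, x', y', u', v', he, hf, hth⟩ := h x y hxy
    -- reduce Θ to original vertices
    have hth' : G.dist x u + G.dist y v ≠ G.dist x v + G.dist y u := by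
      rw [Sym2.eq_iff] at he hf
      rcases he with ⟨rfl, rfl⟩ | ⟨rfl, rfl⟩ <;>
        rcases hf with ⟨rfl, rfl⟩ | ⟨rfl, rfl⟩ <;> omega
    have hu : u ∈ C := hsub (H.edge_vert huv)
    have hv : v ∈ C := hsub (H.edge_vert huv.symm)
    have du := dist_dichotomy hconn hc hxy u
    have dv := dist_dichotomy hconn hc hxy v
    have hd1 : G.dist x y = 1 := dist_eq_one_iff_adj.mpr hxy
    -- one of u, v is strictly closer to y than to x
    have : G.dist x u = G.dist y u + 1 ∨ G.dist x v = G.dist y v + 1 := by omega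
    rcases this with hw | hw
    · exact hconv x hx u hu (show G.dist x y + G.dist y u = G.dist x u by omega)
    · exact hconv x hx v hv (show G.dist x y + G.dist y v = G.dist x v by omega)
  have walkC : ∀ {s t : V} (p : G.Walk s t), s ∈ C → t ∈ C := by
    intro s t p
    induction p with
    | nil => exact id
    | cons hadj _ ih => exact fun hs => ih (step _ _ hs hadj)
  obtain ⟨a, ha⟩ := hne
  apply Set.eq_univ_of_forall
  intro z
  obtain ⟨p⟩ := hconn a z
  exact walkC p (hsub ha)
end

section
/- The pre-hull number of a connected bipartite graph G is zero if and only if G is a tree, i.e., every copoint of the geodesic convexity of G is already convexly extended by one application of the interval operator with exponent 0 exactly when G has no cycles. -/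
open SimpleGraph

universe u

variable {V : Type u}

/-- A copoint at `x`: a convex set maximal with respect to not containing `x`. -/
def IsCopoint (G : SimpleGraph V) (C : Set V) (x : V) : Prop :=
  GConvex G C ∧ x ∉ C ∧ ∀ D : Set V, GConvex G D → C ⊆ D → x ∉ D → D = C

variable {G : SimpleGraph V}

lemma aux_isPath_of_length_eq_dist :
    ∀ {u w : V} (W : G.Walk u w), W.length = G.dist u w → W.IsPath := by
  classical
  intro u w W
  induction W with
  | nil => intro _; exact SimpleGraph.Walk.IsPath.nil
  | @cons u b w h W' ih =>
    intro hlen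
    rw [SimpleGraph.Walk.length_cons] at hlen
    have h1 : G.dist b w ≤ W'.length := SimpleGraph.dist_le W'
    obtain ⟨Q, hQ⟩ := W'.reachable.exists_walk_length_eq_dist
    have h2 : G.dist u w ≤ Q.length + 1 := by
      have := SimpleGraph.dist_le (SimpleGraph.Walk.cons h Q)
      simpa using this
    have hW' : W'.length = G.dist b w := by omega
    have hpath := ih hW'
    have hu : u ∉ W'.support := by
      intro hmem
      have h3 : G.dist u w ≤ (W'.dropUntil u hmem).length := SimpleGraph.dist_le _
      have h4 := SimpleGraph.Walk.length_dropUntil_le W' hmem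
      omega
    exact hpath.cons hu

lemma aux_exists_geodesic_through (hconn : G.Connected) {u w z : V}
    (hz : z ∈ gInterval G u w) :
    ∃ W : G.Walk u w, W.length = G.dist u w ∧ z ∈ W.support := by
  obtain ⟨A, hA⟩ := (hconn.preconnected u z).exists_walk_length_eq_dist
  obtain ⟨B, hB⟩ := (hconn.preconnected z w).exists_walk_length_eq_dist
  refine ⟨A.append B, ?_, ?_⟩
  · rw [SimpleGraph.Walk.length_append, hA, hB]; exact hz
  · rw [SimpleGraph.Walk.mem_support_append_iff]
    exact Or.inl A.end_mem_support

lemma aux_mem_interval_of_mem_support (hconn : G.Connected) {u w z : V}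
    (W : G.Walk u w) (hW : W.length = G.dist u w) (hz : z ∈ W.support) :
    z ∈ gInterval G u w := by
  classical
  have h1 : G.dist u z ≤ (W.takeUntil z hz).length := SimpleGraph.dist_le _
  have h2 : G.dist z w ≤ (W.dropUntil z hz).length := SimpleGraph.dist_le _
  have h3 : (W.takeUntil z hz).length + (W.dropUntil z hz).length = W.length := by
    rw [← SimpleGraph.Walk.length_append, W.take_spec hz]
  have h4 := hconn.dist_triangle (u := u) (v := z) (w := w)
  simp only [gInterval, Set.mem_setOf_eq]
  omega

lemma aux_walk_parity {c : V → Bool} (hc : ∀ u v, G.Adj u v → c u ≠ c v) :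
    ∀ {u w : V} (W : G.Walk u w), (c u = c w ↔ Even W.length) := by
  intro u w W
  induction W with
  | nil => simp
  | @cons u b w h W' ih =>
    have hub := hc _ _ h
    rw [SimpleGraph.Walk.length_cons, Nat.even_add_one, ← ih]
    cases hx : c u <;> cases hy : c b <;> cases hz : c w <;> simp_all

lemma aux_dist_parity (hconn : G.Connected) {c : V → Bool}
    (hc : ∀ u v, G.Adj u v → c u ≠ c v) (u w : V) :
    c u = c w ↔ Even (G.dist u w) := by
  obtain ⟨W, hW⟩ := (hconn.preconnected u w).exists_walk_length_eq_dist
  rw [← hW]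
  exact aux_walk_parity hc W

lemma aux_adj_dist (hconn : G.Connected) {c : V → Bool}
    (hc : ∀ u v, G.Adj u v → c u ≠ c v) {u a b : V} (hab : G.Adj a b) :
    G.dist u b = G.dist u a + 1 ∨ G.dist u a = G.dist u b + 1 := by
  have hd : G.dist a b = 1 := SimpleGraph.dist_eq_one_iff_adj.mpr hab
  have h1 : G.dist u b ≤ G.dist u a + 1 := by
    have := hconn.dist_triangle (u := u) (v := a) (w := b); omega
  have h2 : G.dist u a ≤ G.dist u b + 1 := by
    have := hconn.dist_triangle (u := u) (v := b) (w := a)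
    have := G.dist_comm (u := a) (v := b); omega
  have hne : G.dist u a ≠ G.dist u b := by
    intro heq
    have p1 := aux_dist_parity hconn hc u a
    have p2 := aux_dist_parity hconn hc u b
    rw [heq] at p1
    have := hc _ _ hab
    cases hx : c u <;> cases hy : c a <;> cases hz : c b <;>
      simp_all [Nat.even_iff, Nat.odd_iff] <;> omega
  omega

lemma aux_getVert_eq_get :
    ∀ {u w : V} (p : G.Walk u w) (i : ℕ) (hi : i < p.support.length),
      p.support.get ⟨i, hi⟩ = p.getVert i := by
  intro u w p
  induction p with
  | nil =>
    intro i hi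
    simp only [SimpleGraph.Walk.support_nil, List.length_singleton] at hi
    interval_cases i
    simp [SimpleGraph.Walk.getVert_zero]
  | @cons u b w h p ih =>
    intro i hi
    cases i with
    | zero => simp [SimpleGraph.Walk.support_cons]
    | succ n =>
      simp only [SimpleGraph.Walk.support_cons, List.get_cons_succ,
        SimpleGraph.Walk.getVert_cons_succ]
      apply ih

lemma aux_getVert_tail :
    ∀ {u w : V} (p : G.Walk u w) (k : ℕ) (hk : k < p.support.tail.length),
      p.support.tail.get ⟨k, hk⟩ = p.getVert (k + 1) := by
  intro u w p
  cases p with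
  | nil => intro k hk; simp at hk
  | @cons u b w h p =>
    intro k hk
    simp only [SimpleGraph.Walk.support_cons, List.tail_cons] at hk ⊢
    rw [aux_getVert_eq_get p k hk, SimpleGraph.Walk.getVert_cons_succ]

lemma aux_cycle_getVert_inj {v : V} {cyc : G.Walk v v} (hcyc : cyc.IsCycle) {i j : ℕ}
    (hi1 : 1 ≤ i) (hin : i ≤ cyc.length) (hj1 : 1 ≤ j) (hjn : j ≤ cyc.length)
    (heq : cyc.getVert i = cyc.getVert j) : i = j := by
  have hnd : cyc.support.tail.Nodup := hcyc.support_nodup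
  have hlen : cyc.support.length = cyc.length + 1 := cyc.length_support
  have htlen : cyc.support.tail.length = cyc.length := by
    simp [List.length_tail, hlen]
  have e1 := aux_getVert_tail cyc (i - 1) (by omega)
  have e2 := aux_getVert_tail cyc (j - 1) (by omega)
  have hi' : i - 1 + 1 = i := by omega
  have hj' : j - 1 + 1 = j := by omega
  rw [hi'] at e1
  rw [hj'] at e2
  rw [heq, ← e2] at e1
  have := (List.Nodup.get_inj_iff hnd).mp e1
  have h2 := Fin.mk.injEq .. ▸ this
  simp only [Fin.mk.injEq] at this
  omega

lemma aux_gconvex_singleton (hconn : G.Connected) (v : V) : GConvex G {v} := by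
  intro a ha b hb z hz
  simp only [Set.mem_singleton_iff] at ha hb ⊢
  rw [ha, hb] at hz
  simp only [gInterval, Set.mem_setOf_eq, SimpleGraph.dist_self] at hz
  have h0 : G.dist v z = 0 := by omega
  exact ((hconn.dist_eq_zero_iff).mp h0).symm

lemma aux_exists_copoint {K : Set V} {x : V} (hK : GConvex G K) (hx : x ∉ K) :
    ∃ C, IsCopoint G C x ∧ K ⊆ C := by
  have hch : ∀ ch ⊆ {D : Set V | GConvex G D ∧ x ∉ D ∧ K ⊆ D},
      IsChain (· ⊆ ·) ch → ch.Nonempty →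
      ∃ ub ∈ {D : Set V | GConvex G D ∧ x ∉ D ∧ K ⊆ D}, ∀ s ∈ ch, s ⊆ ub := by
    intro ch hchS hchain hchne
    refine ⟨⋃₀ ch, ⟨?_, ?_, ?_⟩, fun s hs => Set.subset_sUnion_of_mem hs⟩
    · intro a ha b hb z hz
      obtain ⟨Da, hDa, haD⟩ := ha
      obtain ⟨Db, hDb, hbD⟩ := hb
      rcases hchain.total hDa hDb with hsub | hsub
      · exact Set.subset_sUnion_of_mem hDb ((hchS hDb).1 a (hsub haD) b hbD hz)
      · exact Set.subset_sUnion_of_mem hDa ((hchS hDa).1 a haD b (hsub hbD) hz)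
    · rintro ⟨D, hD, hxD⟩
      exact (hchS hD).2.1 hxD
    · obtain ⟨D, hD⟩ := hchne
      exact (hchS hD).2.2.trans (Set.subset_sUnion_of_mem hD)
  obtain ⟨C, hKC, hmem, hmax⟩ := zorn_subset_nonempty
    {D : Set V | GConvex G D ∧ x ∉ D ∧ K ⊆ D} hch K ⟨hK, hx, subset_rfl⟩
  refine ⟨C, ⟨hmem.1, hmem.2.1, ?_⟩, hmem.2.2⟩
  intro D hD hCD hxD
  exact subset_antisymm (hmax ⟨hD, hxD, hmem.2.2.trans hCD⟩ hCD) hCD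

lemma aux_tree_key (hconn : G.Connected) (htree : G.IsTree) {x : V} {C : Set V}
    (hcop : IsCopoint G C x) {p z : V} (hp : p ∈ C) (hz : z ∈ gInterval G p x) :
    z = x ∨ z ∈ C := by
  classical
  obtain ⟨hCconv, hxC, hmaxC⟩ := hcop
  by_cases hzx : z = x
  · exact Or.inl hzx
  right
  set K : Set V := {w | ∃ Wk : G.Walk p w, x ∉ Wk.support} with hKdef
  have hpx : p ≠ x := fun h => hxC (h ▸ hp)
  have hxK : x ∉ K := by rintro ⟨W, hW⟩; exact hW W.end_mem_support
  have hKconv : GConvex G K := by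
    intro a ha b hb y hy
    obtain ⟨Wa, hWa⟩ := ha
    obtain ⟨Wb, hWb⟩ := hb
    have hR : x ∉ (Wa.reverse.append Wb).support := by
      rw [SimpleGraph.Walk.mem_support_append_iff, SimpleGraph.Walk.support_reverse]
      rintro (h | h)
      · exact hWa (List.mem_reverse.mp h)
      · exact hWb h
    set P := (Wa.reverse.append Wb).bypass with hPdef
    have hPpath : P.IsPath := SimpleGraph.Walk.bypass_isPath _
    have hxP : x ∉ P.support := fun h => hR (SimpleGraph.Walk.support_bypass_subset _ h)
    obtain ⟨Wg, hWglen, hyWg⟩ := aux_exists_geodesic_through hconn hy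
    have hWgpath : Wg.IsPath := aux_isPath_of_length_eq_dist Wg hWglen
    have hPW : Wg = P := (htree.existsUnique_path a b).unique hWgpath hPpath
    have hyP : y ∈ P.support := hPW ▸ hyWg
    refine ⟨Wa.append (P.takeUntil y hyP), ?_⟩
    rw [SimpleGraph.Walk.mem_support_append_iff]
    rintro (h | h)
    · exact hWa h
    · exact hxP (SimpleGraph.Walk.support_takeUntil_subset _ hyP h)
  have hCK : C ⊆ K := by
    intro q hq
    obtain ⟨Wc, hWc⟩ := (hconn.preconnected p q).exists_walk_length_eq_dist
    refine ⟨Wc, fun hmem => ?_⟩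
    exact hxC (hCconv p hp q hq (aux_mem_interval_of_mem_support hconn Wc hWc hmem))
  have hKCeq : K = C := hmaxC K hKconv hCK hxK
  obtain ⟨Wz, hWz⟩ := (hconn.preconnected p z).exists_walk_length_eq_dist
  have hxWz : x ∉ Wz.support := by
    intro hmem
    have h1 : G.dist p x ≤ (Wz.takeUntil x hmem).length := SimpleGraph.dist_le _
    have h2 : G.dist x z ≤ (Wz.dropUntil x hmem).length := SimpleGraph.dist_le _
    have h3 : (Wz.takeUntil x hmem).length + (Wz.dropUntil x hmem).length = Wz.length := by
      rw [← SimpleGraph.Walk.length_append, Wz.take_spec hmem]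
    have h4 : G.dist p z + G.dist z x = G.dist p x := hz
    have h5 : G.dist z x = G.dist x z := SimpleGraph.dist_comm
    have h6 : G.dist z x ≠ 0 := fun h => hzx ((hconn.dist_eq_zero_iff).mp h)
    omega
  exact hKCeq ▸ (⟨Wz, hxWz⟩ : z ∈ K)

lemma aux_cycle_dir (hconn : G.Connected) (hbip : IsBipartiteGraph G)
    (H : ∀ (x : V) (C : Set V), IsCopoint G C x → GConvex G (C ∪ {x}))
    {v : V} (cyc : G.Walk v v) (hcyc : cyc.IsCycle) : False := by
  obtain ⟨c, hc⟩ := hbip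
  have h3 : 3 ≤ cyc.length := hcyc.three_le_length
  obtain ⟨i, hi_mem, hmax⟩ := Finset.exists_max_image (Finset.range (cyc.length + 1))
    (fun k => G.dist v (cyc.getVert k)) ⟨0, by simp⟩
  rw [Finset.mem_range] at hi_mem
  set m := cyc.getVert i with hm
  set d := G.dist v m with hd
  have hmax' : ∀ k, k ≤ cyc.length → G.dist v (cyc.getVert k) ≤ d := by
    intro k hk
    exact hmax k (Finset.mem_range.mpr (by omega))
  have hadj01 : G.Adj v (cyc.getVert 1) := by
    have := cyc.adj_getVert_succ (i := 0) (by omega)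
    simpa [cyc.getVert_zero] using this
  have hd1 : 1 ≤ d := by
    have h1 : G.dist v (cyc.getVert 1) = 1 := SimpleGraph.dist_eq_one_iff_adj.mpr hadj01
    have := hmax' 1 (by omega)
    omega
  have hmv : m ≠ v := by
    intro h
    rw [hd, h, SimpleGraph.dist_self] at hd1
    omega
  have hi0 : i ≠ 0 := fun h => hmv (by rw [hm, h, cyc.getVert_zero])
  have hin : i ≠ cyc.length := fun h => hmv (by rw [hm, h, cyc.getVert_length])
  have hi1 : 1 ≤ i := by omega
  have hilt : i < cyc.length := by omega
  set w1 := cyc.getVert (i - 1) with hw1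
  set w2 := cyc.getVert (i + 1) with hw2
  have hadj1 : G.Adj w1 m := by
    have := cyc.adj_getVert_succ (i := i - 1) (by omega)
    have hi' : i - 1 + 1 = i := by omega
    rw [hi'] at this
    exact this
  have hadj2 : G.Adj m w2 := cyc.adj_getVert_succ (i := i) hilt
  have hne12 : w1 ≠ w2 := by
    intro heq
    rcases Nat.lt_or_ge 1 i with hgt | hle
    · have := aux_cycle_getVert_inj hcyc (i := i - 1) (j := i + 1)
        (by omega) (by omega) (by omega) (by omega) heq
      omega
    · -- i = 1
      have hi1' : i = 1 := by omega
      have hv0 : w1 = v := by rw [hw1, hi1', cyc.getVert_zero]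
      have h2n : cyc.getVert 2 = cyc.getVert cyc.length := by
        have hgv : cyc.getVert 2 = w2 := by rw [hw2, hi1']
        rw [hgv, ← heq, hv0, cyc.getVert_length]
      have := aux_cycle_getVert_inj hcyc (i := 2) (j := cyc.length)
        (by omega) (by omega) (by omega) (by omega) h2n
      omega
  have hdm1 : G.dist w1 m = 1 := SimpleGraph.dist_eq_one_iff_adj.mpr hadj1
  have hdm2 : G.dist m w2 = 1 := SimpleGraph.dist_eq_one_iff_adj.mpr hadj2
  have hdw1 : G.dist v w1 + 1 = d := by
    have hle := hmax' (i - 1) (by omega)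
    rw [← hw1] at hle
    rcases aux_adj_dist hconn hc (u := v) hadj1 with h | h <;> rw [← hd] at h <;> omega
  have hdw2 : G.dist v w2 + 1 = d := by
    have hle := hmax' (i + 1) (by omega)
    rw [← hw2] at hle
    rcases aux_adj_dist hconn hc (u := v) hadj2.symm with h | h <;> rw [← hd] at h <;> omega
  -- copoint at m containing v
  obtain ⟨C, hcop, hvC⟩ := aux_exists_copoint (G := G) (x := m)
    (aux_gconvex_singleton hconn v) (by simpa using hmv)
  have hvC' : v ∈ C := hvC rfl
  have Hext := H m C hcop
  have hdm2' : G.dist w2 m = 1 := by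
    rw [SimpleGraph.dist_comm]; exact hdm2
  have hw1int : w1 ∈ gInterval G v m := by
    simp only [gInterval, Set.mem_setOf_eq]
    rw [hdm1, ← hd]
    omega
  have hw2int : w2 ∈ gInterval G v m := by
    simp only [gInterval, Set.mem_setOf_eq]
    rw [hdm2', ← hd]
    omega
  have hw1mem : w1 ∈ C := by
    rcases Hext v (Set.mem_union_left _ hvC') m (Set.mem_union_right _ rfl) hw1int
      with h | h
    · exact h
    · exfalso
      rw [Set.mem_singleton_iff] at h
      rw [h, ← hd] at hdw1
      omega
  have hw2mem : w2 ∈ C := by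
    rcases Hext v (Set.mem_union_left _ hvC') m (Set.mem_union_right _ rfl) hw2int
      with h | h
    · exact h
    · exfalso
      rw [Set.mem_singleton_iff] at h
      rw [h, ← hd] at hdw2
      omega
  have hr12 : G.dist w1 w2 ≤ 2 := by
    have := hconn.dist_triangle (u := w1) (v := m) (w := w2)
    omega
  have hne0 : G.dist w1 w2 ≠ 0 := fun h => hne12 ((hconn.dist_eq_zero_iff).mp h)
  have heven : Even (G.dist w1 w2) := by
    have p1 := aux_dist_parity hconn hc v w1
    have p2 := aux_dist_parity hconn hc v w2
    have p3 := aux_dist_parity hconn hc w1 w2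
    have hdd : G.dist v w1 = G.dist v w2 := by omega
    rw [← p3]
    rw [hdd] at p1
    cases hx : c v <;> cases hy : c w1 <;> cases hz : c w2 <;>
      simp_all [Nat.even_iff, Nat.odd_iff] <;> omega
  have hd12 : G.dist w1 w2 = 2 := by
    obtain ⟨t, ht⟩ := heven
    omega
  have hmint : m ∈ gInterval G w1 w2 := by
    simp only [gInterval, Set.mem_setOf_eq]
    rw [hdm1, hdm2, hd12]
  exact hcop.2.1 (hcop.1 w1 hw1mem w2 hw2mem hmint)

lemma aux_gInterval_symm {u w z : V} (h : z ∈ gInterval G u w) :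
    z ∈ gInterval G w u := by
  simp only [gInterval, Set.mem_setOf_eq] at h ⊢
  rw [SimpleGraph.dist_comm (u := w) (v := z), SimpleGraph.dist_comm (u := z) (v := u),
    SimpleGraph.dist_comm (u := w) (v := u)]
  omega

/-- A connected bipartite graph has pre-hull number zero (each copoint extended
by an attaching point is already convex) iff it is a tree. -/
theorem stmt_14 (G : SimpleGraph V) (hconn : G.Connected)
    (hbip : IsBipartiteGraph G) :
    (∀ (x : V) (C : Set V), IsCopoint G C x → GConvex G (C ∪ {x})) ↔
      G.IsTree := by
  constructor
  · intro H
    refine ⟨hconn, ?_⟩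
    intro v cyc hcyc
    exact aux_cycle_dir hconn hbip H cyc hcyc
  · intro htree x C hcop
    intro p hp q hq z hz
    rcases hp with hp | hp <;> rcases hq with hq | hq
    · exact Set.mem_union_left _ (hcop.1 p hp q hq hz)
    · rw [Set.mem_singleton_iff] at hq
      subst hq
      rcases aux_tree_key hconn htree hcop hp hz with h | h
      · exact Set.mem_union_right _ (by rw [h]; rfl)
      · exact Set.mem_union_left _ h
    · rw [Set.mem_singleton_iff] at hp
      subst hp
      rcases aux_tree_key hconn htree hcop hq (aux_gInterval_symm hz) with h | h
      · exact Set.mem_union_right _ (by rw [h]; rfl)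
      · exact Set.mem_union_left _ h
    · rw [Set.mem_singleton_iff] at hp hq
      rw [hp, hq] at hz
      simp only [gInterval, Set.mem_setOf_eq, SimpleGraph.dist_self] at hz
      have h0 : G.dist x z = 0 := by omega
      exact Set.mem_union_right _
        (Set.mem_singleton_iff.mpr ((hconn.dist_eq_zero_iff).mp h0).symm)
end

section
/- Let (u,v,w) be a metric triangle of a partial cube G such that the convex hull of {u,v,w} induces a Cartesian product of even cycles ∏_i C_i. Then for each factor i, the projections (pr_i(u), pr_i(v), pr_i(w)) form a metric triangle of C_i, and hence each C_i has length greater than 4. -/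
open SimpleGraph

universe u

variable {V : Type u}

/-- The Cartesian product of a family of graphs. -/
def cartProd {ι : Type*} {β : ι → Type*} (G : ∀ i, SimpleGraph (β i)) :
    SimpleGraph (∀ i, β i) where
  Adj x y := ∃ i, (G i).Adj (x i) (y i) ∧ ∀ j, j ≠ i → x j = y j
  symm := by
    refine ⟨?_⟩
    rintro x y ⟨i, hadj, h⟩
    exact ⟨i, hadj.symm, fun j hj => (h j hj).symm⟩
  loopless := by
    refine ⟨?_⟩
    rintro x ⟨i, hadj, -⟩
    exact (G i).irrefl hadj

/-- A metric triangle: the three geodesic intervals pairwise intersect exactly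
in their common endvertices. -/
def IsMetricTriangle {W : Type*} (H : SimpleGraph W) (a b c : W) : Prop :=
  gInterval H a b ∩ gInterval H a c = {a} ∧
  gInterval H b a ∩ gInterval H b c = {b} ∧
  gInterval H c a ∩ gInterval H c b = {c}

/-! ### Auxiliary lemmas -/

section AuxBasic
variable {W : Type*} {G : SimpleGraph W}

lemma aux_left_mem_gInterval {a b : W} : a ∈ gInterval G a b := by
  simp [gInterval, SimpleGraph.dist_self]

lemma aux_mem_gInterval_left {a b : W} : a ∈ gInterval G b a := by
  simp [gInterval, SimpleGraph.dist_self]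

lemma aux_gInterval_self (hG : G.Connected) (t : W) :
    gInterval G t t = {t} := by
  ext z
  simp only [gInterval, Set.mem_setOf_eq, SimpleGraph.dist_self, Set.mem_singleton_iff]
  constructor
  · intro h
    have h1 : G.dist t z = 0 := by omega
    exact (hG.dist_eq_zero_iff.mp h1).symm
  · rintro rfl; simp [SimpleGraph.dist_self]

lemma aux_mem_gInterval_of_shortest {x y z : W} (p : G.Walk x y)
    (hp : p.length = G.dist x y) (hz : z ∈ p.support) : z ∈ gInterval G x y := by
  classical
  have h1 : G.dist x z ≤ (p.takeUntil z hz).length := SimpleGraph.dist_le _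
  have h2 : G.dist z y ≤ (p.dropUntil z hz).length := SimpleGraph.dist_le _
  have h3 : (p.takeUntil z hz).length + (p.dropUntil z hz).length = p.length := by
    rw [← SimpleGraph.Walk.length_append, p.take_spec hz]
  have h4 : G.dist x y ≤ G.dist x z + G.dist z y := by
    obtain ⟨q1, hq1⟩ := SimpleGraph.Reachable.exists_walk_length_eq_dist ⟨p.takeUntil z hz⟩
    obtain ⟨q2, hq2⟩ := SimpleGraph.Reachable.exists_walk_length_eq_dist ⟨p.dropUntil z hz⟩
    calc G.dist x y ≤ (q1.append q2).length := SimpleGraph.dist_le _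
      _ = G.dist x z + G.dist z y := by rw [SimpleGraph.Walk.length_append, hq1, hq2]
  show G.dist x z + G.dist z y = G.dist x y
  omega

lemma aux_exists_induce_walk {S : Set W} :
    ∀ {a b : W} (p : G.Walk a b) (hp : ∀ z ∈ p.support, z ∈ S),
    ∃ q : (G.induce S).Walk ⟨a, hp a p.start_mem_support⟩ ⟨b, hp b p.end_mem_support⟩,
      q.length = p.length := by
  intro a b p
  induction p with
  | nil => intro hp; exact ⟨.nil, rfl⟩
  | @cons a c b h p ih =>
      intro hp
      obtain ⟨q, hq⟩ := ih (fun z hz => hp z (List.mem_cons_of_mem _ hz))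
      exact ⟨SimpleGraph.Walk.cons (by exact h) q, by simp [hq]; exact congrArg (· + 1) hq⟩

lemma GConvex.induce_dist {S : Set W} (hc : GConvex G S)
    (hG : G.Connected) {a b : W} (ha : a ∈ S) (hb : b ∈ S) :
    (G.induce S).dist ⟨a, ha⟩ ⟨b, hb⟩ = G.dist a b := by
  obtain ⟨p, hp⟩ := hG.exists_walk_length_eq_dist a b
  have hsub : ∀ z ∈ p.support, z ∈ S := fun z hz =>
    hc a ha b hb (aux_mem_gInterval_of_shortest p hp hz)
  obtain ⟨q, hq⟩ := aux_exists_induce_walk p hsub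
  apply le_antisymm
  · calc (G.induce S).dist ⟨a, ha⟩ ⟨b, hb⟩ ≤ q.length := SimpleGraph.dist_le q
      _ = G.dist a b := by rw [hq, hp]
  · have hr : (G.induce S).Reachable ⟨a, ha⟩ ⟨b, hb⟩ := ⟨q⟩
    obtain ⟨r, hr'⟩ := hr.exists_walk_length_eq_dist
    calc G.dist a b ≤ (r.map (SimpleGraph.Embedding.induce S).toHom).length :=
          SimpleGraph.dist_le _
      _ = (G.induce S).dist ⟨a, ha⟩ ⟨b, hb⟩ := by rw [SimpleGraph.Walk.length_map, hr']

lemma GConvex.induce_gInterval {S : Set W} (hc : GConvex G S)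
    (hG : G.Connected) {a b z : W} (ha : a ∈ S) (hb : b ∈ S) (hz : z ∈ S) :
    (⟨z, hz⟩ : S) ∈ gInterval (G.induce S) ⟨a, ha⟩ ⟨b, hb⟩ ↔ z ∈ gInterval G a b := by
  unfold gInterval
  simp only [Set.mem_setOf_eq, hc.induce_dist hG ha hz, hc.induce_dist hG hz hb,
    hc.induce_dist hG ha hb]

end AuxBasic

section AuxProd
variable {ι : Type*} [Fintype ι] {β : ι → Type*} (K : ∀ i, SimpleGraph (β i))

omit [Fintype ι] in
lemma aux_cartProd_walk_update [DecidableEq ι] {i : ι} :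
    ∀ {a b : β i} (p : (K i).Walk a b) (x : ∀ j, β j), x i = a →
    ∃ q : (cartProd K).Walk x (Function.update x i b), q.length = p.length := by
  intro a b p
  induction p with
  | nil =>
      intro x hx
      exact ⟨(SimpleGraph.Walk.nil).copy rfl (by rw [← hx, Function.update_eq_self]), by simp⟩
  | @cons a c b h p ih =>
      intro x hx
      have hadj : (cartProd K).Adj x (Function.update x i c) := by
        refine ⟨i, ?_, fun j hj => (Function.update_of_ne hj c x).symm⟩
        rw [Function.update_self, hx]; exact h
      obtain ⟨q, hq⟩ := ih (Function.update x i c) (Function.update_self i c x)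
      exact ⟨(SimpleGraph.Walk.cons hadj q).copy rfl (by rw [Function.update_idem]),
        by simp [hq]⟩

lemma aux_cartProd_walk_le [DecidableEq ι] (hK : ∀ i, (K i).Connected) (s : Finset ι) :
    ∀ x y : ∀ i, β i, (∀ j ∉ s, x j = y j) →
    ∃ q : (cartProd K).Walk x y, q.length ≤ ∑ i ∈ s, (K i).dist (x i) (y i) := by
  induction s using Finset.induction with
  | empty =>
      intro x y h
      have hxy : x = y := funext fun j => h j (by simp)
      exact ⟨(SimpleGraph.Walk.nil).copy rfl hxy, by simp⟩
  | @insert i s hi ih =>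
      intro x y h
      obtain ⟨p, hp⟩ := (hK i).exists_walk_length_eq_dist (x i) (y i)
      obtain ⟨q1, hq1⟩ := aux_cartProd_walk_update K p x rfl
      obtain ⟨q2, hq2⟩ := ih (Function.update x i (y i)) y (fun j hj => by
        by_cases hji : j = i
        · subst hji; simp
        · rw [Function.update_of_ne hji]
          exact h j (by simp [Finset.mem_insert, hji, hj]))
      refine ⟨q1.append q2, ?_⟩
      rw [SimpleGraph.Walk.length_append, Finset.sum_insert hi]
      have hs : ∑ j ∈ s, (K j).dist (Function.update x i (y i) j) (y j)
          = ∑ j ∈ s, (K j).dist (x j) (y j) := by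
        apply Finset.sum_congr rfl
        intro j hj
        rw [Function.update_of_ne (by rintro rfl; exact hi hj)]
      rw [hq1, hp]
      exact Nat.add_le_add_left (hq2.trans_eq hs) _

lemma aux_cartProd_connected (hK : ∀ i, (K i).Connected) : (cartProd K).Connected := by
  classical
  have hne : Nonempty (∀ i, β i) := ⟨fun i => (hK i).nonempty.some⟩
  rw [SimpleGraph.connected_iff]
  refine ⟨fun x y => ?_, hne⟩
  obtain ⟨q, -⟩ := aux_cartProd_walk_le K hK Finset.univ x y (by simp)
  exact ⟨q⟩

lemma aux_cartProd_dist (hK : ∀ i, (K i).Connected) (x y : ∀ i, β i) :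
    (cartProd K).dist x y = ∑ i, (K i).dist (x i) (y i) := by
  classical
  apply le_antisymm
  · obtain ⟨q, hq⟩ := aux_cartProd_walk_le K hK Finset.univ x y (by simp)
    exact le_trans (SimpleGraph.dist_le q) hq
  · obtain ⟨p, hp⟩ := (aux_cartProd_connected K hK).exists_walk_length_eq_dist x y
    rw [← hp]
    clear hp
    induction p with
    | nil => simp
    | @cons x z y h p ih =>
        obtain ⟨i0, hadj, heq⟩ := id h
        have h1 : ∑ i, (K i).dist (x i) (z i) = 1 := by
          rw [Finset.sum_eq_single i0]
          · exact SimpleGraph.dist_eq_one_iff_adj.mpr hadj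
          · intro j _ hj
            rw [heq j hj, SimpleGraph.dist_self]
          · simp
        calc ∑ i, (K i).dist (x i) (y i)
            ≤ ∑ i, ((K i).dist (x i) (z i) + (K i).dist (z i) (y i)) :=
              Finset.sum_le_sum fun i _ => (hK i).dist_triangle
          _ = 1 + ∑ i, (K i).dist (z i) (y i) := by rw [Finset.sum_add_distrib, h1]
          _ ≤ 1 + p.length := by omega
          _ = (SimpleGraph.Walk.cons h p).length := by
              rw [SimpleGraph.Walk.length_cons]; omega

lemma aux_cartProd_gInterval (hK : ∀ i, (K i).Connected) (x y z : ∀ i, β i) :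
    z ∈ gInterval (cartProd K) x y ↔ ∀ i, z i ∈ gInterval (K i) (x i) (y i) := by
  unfold gInterval
  simp only [Set.mem_setOf_eq, aux_cartProd_dist K hK, ← Finset.sum_add_distrib]
  constructor
  · intro h i
    have key := (Finset.sum_eq_sum_iff_of_le
      (f := fun i => (K i).dist (x i) (y i))
      (g := fun i => (K i).dist (x i) (z i) + (K i).dist (z i) (y i))
      (fun i _ => (hK i).dist_triangle)).mp h.symm
    exact (key i (Finset.mem_univ i)).symm
  · intro h
    exact Finset.sum_congr rfl fun i _ => h i

lemma aux_cartProd_isMetricTriangle (hK : ∀ i, (K i).Connected) {a b c : ∀ i, β i}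
    (h : IsMetricTriangle (cartProd K) a b c) (i : ι) :
    IsMetricTriangle (K i) (a i) (b i) (c i) := by
  classical
  have key : ∀ x y z : ∀ i, β i,
      gInterval (cartProd K) x y ∩ gInterval (cartProd K) x z = {x} →
      gInterval (K i) (x i) (y i) ∩ gInterval (K i) (x i) (z i) = {x i} := by
    intro x y z hxy
    ext t
    simp only [Set.mem_inter_iff, Set.mem_singleton_iff]
    constructor
    · rintro ⟨ht1, ht2⟩
      have h1 : Function.update x i t ∈ gInterval (cartProd K) x y := by
        rw [aux_cartProd_gInterval K hK]
        intro j
        by_cases hj : j = i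
        · subst hj; simpa using ht1
        · rw [Function.update_of_ne hj]; exact aux_left_mem_gInterval
      have h2 : Function.update x i t ∈ gInterval (cartProd K) x z := by
        rw [aux_cartProd_gInterval K hK]
        intro j
        by_cases hj : j = i
        · subst hj; simpa using ht2
        · rw [Function.update_of_ne hj]; exact aux_left_mem_gInterval
      have h3 : Function.update x i t = x := by
        have := Set.ext_iff.mp hxy (Function.update x i t)
        exact this.mp ⟨h1, h2⟩
      calc t = Function.update x i t i := by rw [Function.update_self]
        _ = x i := by rw [h3]
    · rintro rfl
      exact ⟨aux_left_mem_gInterval, aux_left_mem_gInterval⟩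
  exact ⟨key a b c h.1, key b a c h.2.1, key c a b h.2.2⟩

end AuxProd

section AuxIso
variable {W₁ W₂ : Type*} {G₁ : SimpleGraph W₁} {G₂ : SimpleGraph W₂}

lemma aux_iso_dist_le (φ : G₁ ≃g G₂) (a b : W₁) : G₂.dist (φ a) (φ b) ≤ G₁.dist a b := by
  by_cases hr : G₁.Reachable a b
  · obtain ⟨p, hp⟩ := hr.exists_walk_length_eq_dist
    calc G₂.dist (φ a) (φ b) ≤ (p.map φ.toHom).length := SimpleGraph.dist_le _
      _ = G₁.dist a b := by rw [SimpleGraph.Walk.length_map, hp]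
  · have hr2 : ¬G₂.Reachable (φ a) (φ b) := fun ⟨q⟩ =>
      hr ⟨(q.map φ.symm.toHom).copy (by simp) (by simp)⟩
    rw [SimpleGraph.dist_eq_zero_of_not_reachable hr,
      SimpleGraph.dist_eq_zero_of_not_reachable hr2]

lemma aux_iso_dist_eq (φ : G₁ ≃g G₂) (a b : W₁) : G₂.dist (φ a) (φ b) = G₁.dist a b := by
  refine le_antisymm (aux_iso_dist_le φ a b) ?_
  have := aux_iso_dist_le φ.symm (φ a) (φ b)
  simpa using this

lemma aux_iso_mem_gInterval (φ : G₁ ≃g G₂) {a b z : W₁} :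
    φ z ∈ gInterval G₂ (φ a) (φ b) ↔ z ∈ gInterval G₁ a b := by
  unfold gInterval
  simp only [Set.mem_setOf_eq, aux_iso_dist_eq φ]

lemma aux_iso_isMetricTriangle (φ : G₁ ≃g G₂) {a b c : W₁}
    (h : IsMetricTriangle G₁ a b c) : IsMetricTriangle G₂ (φ a) (φ b) (φ c) := by
  have key : ∀ x y z : W₁, gInterval G₁ x y ∩ gInterval G₁ x z = {x} →
      gInterval G₂ (φ x) (φ y) ∩ gInterval G₂ (φ x) (φ z) = {φ x} := by
    intro x y z hx
    ext t
    obtain ⟨s, rfl⟩ := φ.surjective t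
    simp only [Set.mem_inter_iff, Set.mem_singleton_iff, aux_iso_mem_gInterval φ,
      EmbeddingLike.apply_eq_iff_eq]
    rw [← Set.mem_singleton_iff, ← hx]
    rfl
  exact ⟨key a b c h.1, key b a c h.2.1, key c a b h.2.2⟩

end AuxIso

section AuxMT
variable {W : Type*} {H : SimpleGraph W}

lemma aux_mt_degenerate {a b c : W} (h : IsMetricTriangle H a b c)
    (heq : a = b ∨ a = c ∨ b = c) : a = b ∧ a = c := by
  obtain ⟨h1, h2, h3⟩ := h
  have hmem : ∀ x y : W, x ∈ gInterval H y x := by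
    intro x y; simp [gInterval, SimpleGraph.dist_self]
  rcases heq with rfl | rfl | rfl
  · have : a ∈ gInterval H c a ∩ gInterval H c a := ⟨hmem a c, hmem a c⟩
    rw [h3, Set.mem_singleton_iff] at this
    exact ⟨rfl, this⟩
  · have : a ∈ gInterval H b a ∩ gInterval H b a := ⟨hmem a b, hmem a b⟩
    rw [h2, Set.mem_singleton_iff] at this
    exact ⟨this, rfl⟩
  · have : b ∈ gInterval H a b ∩ gInterval H a b := ⟨hmem b a, hmem b a⟩
    rw [h1, Set.mem_singleton_iff] at this
    exact ⟨this.symm, this.symm⟩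

end AuxMT

section AuxC4

lemma aux_c4_dist (x y : Fin 4) : (SimpleGraph.cycleGraph 4).dist x y =
    if x = y then 0 else if (SimpleGraph.cycleGraph 4).Adj x y then 1 else 2 := by
  have hconn : (SimpleGraph.cycleGraph 4).Connected := SimpleGraph.cycleGraph_connected (n := 3)
  split_ifs with h1 h2
  · subst h1; exact SimpleGraph.dist_self
  · exact SimpleGraph.dist_eq_one_iff_adj.mpr h2
  · have a1 : ∀ t : Fin 4, (SimpleGraph.cycleGraph 4).Adj t (t + 1) := by decide
    have hy : y = x + 2 := by revert h1 h2; revert x y; decide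
    have hle : (SimpleGraph.cycleGraph 4).dist x y ≤ 2 := by
      subst hy
      have h11 : x + 1 + 1 = x + 2 := by
        have : ∀ t : Fin 4, t + 1 + 1 = t + 2 := by decide
        exact this x
      refine le_trans (SimpleGraph.dist_le
        (((SimpleGraph.Walk.cons (a1 x) (SimpleGraph.Walk.cons (a1 (x + 1)) .nil))).copy
          rfl h11)) ?_
      rw [SimpleGraph.Walk.length_copy]
      simp
    have h0 : (SimpleGraph.cycleGraph 4).dist x y ≠ 0 :=
      fun h => h1 (hconn.dist_eq_zero_iff.mp h)
    have hne1 : (SimpleGraph.cycleGraph 4).dist x y ≠ 1 :=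
      fun h => h2 (SimpleGraph.dist_eq_one_iff_adj.mp h)
    omega

set_option synthInstance.maxHeartbeats 1000000 in
set_option synthInstance.maxSize 2000 in
set_option maxHeartbeats 2000000 in
lemma aux_c4_no_mt (a b c : Fin 4) (hab : a ≠ b) (hac : a ≠ c) (hbc : b ≠ c) :
    ¬ IsMetricTriangle (SimpleGraph.cycleGraph 4) a b c := by
  intro h
  obtain ⟨h1, h2, h3⟩ := h
  rw [Set.ext_iff] at h1 h2 h3
  simp only [gInterval, Set.mem_inter_iff, Set.mem_setOf_eq, Set.mem_singleton_iff,
    aux_c4_dist] at h1 h2 h3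
  revert hab hac hbc h1 h2 h3
  revert a b c
  decide

lemma aux_no_mt_of_eq_four {m : ℕ} (hm : m = 4) (a b c : Fin m)
    (hab : a ≠ b) (hac : a ≠ c) (hbc : b ≠ c) :
    ¬ IsMetricTriangle (SimpleGraph.cycleGraph m) a b c := by
  subst hm; exact aux_c4_no_mt a b c hab hac hbc

end AuxC4
/-- If the convex hull of a metric triangle of a partial cube induces a
Cartesian product of even cycles, then the projections of the triple onto each
factor form a metric triangle of that factor; hence each factor has length
greater than 4. -/
theorem stmt_17 (G : SimpleGraph V) (hG : IsPartialCube G)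
    (u v w : V) (htri : IsMetricTriangle G u v w)
    {ι : Type*} [Fintype ι] (n : ι → ℕ) (hn : ∀ i, 2 ≤ n i)
    (φ : (G.induce (gConvexHull G {u, v, w})) ≃g
      cartProd (fun i => SimpleGraph.cycleGraph (2 * n i)))
    (hu : u ∈ gConvexHull G {u, v, w}) (hv : v ∈ gConvexHull G {u, v, w})
    (hw : w ∈ gConvexHull G {u, v, w}) :
    ∀ i : ι,
      IsMetricTriangle (SimpleGraph.cycleGraph (2 * n i))
        (φ ⟨u, hu⟩ i) (φ ⟨v, hv⟩ i) (φ ⟨w, hw⟩ i) ∧ 4 < 2 * n i := by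
  classical
  have hGc : G.Connected := hG.1
  have hHconv : GConvex G (gConvexHull G {u, v, w}) := by
    intro x hx y hy z hz
    simp only [gConvexHull, Set.mem_sInter] at hx hy ⊢
    intro C hC
    exact hC.1 x (hx C hC) y (hy C hC) hz
  have hKconn : ∀ j : ι, (SimpleGraph.cycleGraph (2 * n j)).Connected := by
    intro j
    have h : 2 * n j = (2 * n j - 1) + 1 := by have := hn j; omega
    rw [h]
    exact SimpleGraph.cycleGraph_connected
  -- metric triangle in the induced subgraph
  have hmt_ind : IsMetricTriangle (G.induce (gConvexHull G {u, v, w}))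
      ⟨u, hu⟩ ⟨v, hv⟩ ⟨w, hw⟩ := by
    have key : ∀ (x y z : V) (hx : x ∈ gConvexHull G {u, v, w})
        (hy : y ∈ gConvexHull G {u, v, w}) (hz : z ∈ gConvexHull G {u, v, w}),
        gInterval G x y ∩ gInterval G x z = {x} →
        gInterval (G.induce (gConvexHull G {u, v, w})) ⟨x, hx⟩ ⟨y, hy⟩ ∩
          gInterval (G.induce (gConvexHull G {u, v, w})) ⟨x, hx⟩ ⟨z, hz⟩
          = {(⟨x, hx⟩ : gConvexHull G {u, v, w})} := by
      intro x y z hx hy hz hxyz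
      ext ⟨t, ht⟩
      simp only [Set.mem_inter_iff, Set.mem_singleton_iff, Subtype.mk.injEq]
      rw [hHconv.induce_gInterval hGc hx hy ht, hHconv.induce_gInterval hGc hx hz ht,
        ← Set.mem_inter_iff, hxyz, Set.mem_singleton_iff]
    exact ⟨key u v w hu hv hw htri.1, key v u w hv hu hw htri.2.1,
      key w u v hw hu hv htri.2.2⟩
  -- metric triangle in the Cartesian product
  have hmt_prod : IsMetricTriangle (cartProd (fun i => SimpleGraph.cycleGraph (2 * n i)))
      (φ ⟨u, hu⟩) (φ ⟨v, hv⟩) (φ ⟨w, hw⟩) := aux_iso_isMetricTriangle φ hmt_ind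
  intro i
  have hmt_i : IsMetricTriangle (SimpleGraph.cycleGraph (2 * n i))
      (φ ⟨u, hu⟩ i) (φ ⟨v, hv⟩ i) (φ ⟨w, hw⟩ i) :=
    aux_cartProd_isMetricTriangle _ hKconn hmt_prod i
  -- nondegeneracy: the three projections are not all equal
  have hnd : ¬(φ ⟨u, hu⟩ i = φ ⟨v, hv⟩ i ∧ φ ⟨u, hu⟩ i = φ ⟨w, hw⟩ i) := by
    rintro ⟨heq1, heq2⟩
    set t : Fin (2 * n i) := φ ⟨u, hu⟩ i with htdef
    have hCconv : GConvex G {x | ∃ h : x ∈ gConvexHull G {u, v, w}, φ ⟨x, h⟩ i = t} := by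
      rintro x ⟨hxH, hxt⟩ y ⟨hyH, hyt⟩ z hz
      have hzH : z ∈ gConvexHull G {u, v, w} := hHconv x hxH y hyH hz
      refine ⟨hzH, ?_⟩
      have hz1 : (⟨z, hzH⟩ : gConvexHull G {u, v, w}) ∈
          gInterval (G.induce (gConvexHull G {u, v, w})) ⟨x, hxH⟩ ⟨y, hyH⟩ :=
        (hHconv.induce_gInterval hGc hxH hyH hzH).mpr hz
      have hz2 : φ ⟨z, hzH⟩ ∈ gInterval (cartProd (fun i => SimpleGraph.cycleGraph (2 * n i)))
          (φ ⟨x, hxH⟩) (φ ⟨y, hyH⟩) := (aux_iso_mem_gInterval φ).mpr hz1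
      have hz3 := (aux_cartProd_gInterval _ hKconn _ _ _).mp hz2 i
      rw [hxt, hyt, aux_gInterval_self (hKconn i) t] at hz3
      exact hz3
    have hsub : gConvexHull G {u, v, w} ⊆
        {x | ∃ h : x ∈ gConvexHull G {u, v, w}, φ ⟨x, h⟩ i = t} := by
      apply Set.sInter_subset_of_mem
      refine ⟨hCconv, ?_⟩
      rintro x (rfl | rfl | rfl)
      · exact ⟨hu, rfl⟩
      · exact ⟨hv, heq1.symm⟩
      · exact ⟨hw, heq2.symm⟩
    have hnt : Nontrivial (Fin (2 * n i)) := by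
      have h4 : 4 ≤ 2 * n i := by have := hn i; omega
      exact ⟨⟨⟨0, by omega⟩, ⟨1, by omega⟩, by simp [Fin.ext_iff]⟩⟩
    obtain ⟨s, hs⟩ := exists_ne t
    set p : ∀ j : ι, Fin (2 * n j) := Function.update (φ ⟨u, hu⟩) i s with hpdef
    obtain ⟨hH', hval⟩ := hsub (φ.symm p).2
    have happ : φ ⟨(φ.symm p : gConvexHull G {u, v, w}), hH'⟩ = p := by
      have hsv : (⟨((φ.symm p : gConvexHull G {u, v, w}) : V), hH'⟩ :
          gConvexHull G {u, v, w}) = φ.symm p := Subtype.ext rfl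
      rw [hsv]
      exact φ.apply_symm_apply p
    rw [happ, hpdef, Function.update_self] at hval
    exact hs hval
  have hd1 : φ ⟨u, hu⟩ i ≠ φ ⟨v, hv⟩ i :=
    fun h => hnd (aux_mt_degenerate hmt_i (Or.inl h))
  have hd2 : φ ⟨u, hu⟩ i ≠ φ ⟨w, hw⟩ i :=
    fun h => hnd (aux_mt_degenerate hmt_i (Or.inr (Or.inl h)))
  have hd3 : φ ⟨v, hv⟩ i ≠ φ ⟨w, hw⟩ i :=
    fun h => hnd (aux_mt_degenerate hmt_i (Or.inr (Or.inr h)))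
  refine ⟨hmt_i, ?_⟩
  by_contra h4
  have hm4 : 2 * n i = 4 := by have := hn i; omega
  exact aux_no_mt_of_eq_four hm4 _ _ _ hd1 hd2 hd3 hmt_i
end

section
/- The Cartesian product G □ H of two graphs is antipodal if and only if both G and H are antipodal. -/
open SimpleGraph

universe u

variable {V : Type u}

/-- An antipodal graph: connected, and every vertex `x` has an antipode `y`
with `I(x,y)` the whole vertex set. -/
def IsAntipodal {W : Type*} (G : SimpleGraph W) : Prop :=
  G.Connected ∧ ∀ x : W, ∃ y : W, gInterval G x y = Set.univ

/- auxiliary -/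

lemma walk_len_ge {V₁ V₂ : Type*} {G : SimpleGraph V₁} {H : SimpleGraph V₂}
    (hG : G.Connected) (hH : H.Connected) :
    ∀ {x y : V₁ × V₂} (w : (G.boxProd H).Walk x y),
      G.dist x.1 y.1 + H.dist x.2 y.2 ≤ w.length
  | _, _, Walk.nil => by simp
  | x, y, @Walk.cons _ _ _ z _ h w => by
    have ih := walk_len_ge hG hH w
    rw [Walk.length_cons]
    rcases (SimpleGraph.boxProd_adj.1 h) with ⟨ha, he⟩ | ⟨ha, he⟩
    · have t1 := hG.dist_triangle (u := x.1) (v := z.1) (w := y.1)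
      have t2 : G.dist x.1 z.1 ≤ 1 := by
        rw [SimpleGraph.dist_eq_one_iff_adj.2 ha]
      rw [← he] at ih
      omega
    · have t1 := hH.dist_triangle (u := x.2) (v := z.2) (w := y.2)
      have t2 : H.dist x.2 z.2 ≤ 1 := by
        rw [SimpleGraph.dist_eq_one_iff_adj.2 ha]
      rw [← he] at ih
      omega

lemma dist_boxProd {V₁ V₂ : Type*} {G : SimpleGraph V₁} {H : SimpleGraph V₂}
    (hG : G.Connected) (hH : H.Connected) (x y : V₁ × V₂) :
    (G.boxProd H).dist x y = G.dist x.1 y.1 + H.dist x.2 y.2 := by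
  apply le_antisymm
  · obtain ⟨w₁, h₁⟩ := hG.exists_walk_length_eq_dist x.1 y.1
    obtain ⟨w₂, h₂⟩ := hH.exists_walk_length_eq_dist x.2 y.2
    have := SimpleGraph.dist_le ((w₁.boxProdLeft H x.2).append (w₂.boxProdRight G y.1))
    have e1 : (w₁.boxProdLeft H x.2).length = w₁.length := Walk.length_map _ _
    have e2 : (w₂.boxProdRight G y.1).length = w₂.length := Walk.length_map _ _
    rw [Walk.length_append, e1, e2, h₁, h₂] at this
    exact this
  · obtain ⟨w, hw⟩ := (hG.boxProd hH).exists_walk_length_eq_dist x y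
    rw [← hw]
    exact walk_len_ge hG hH w

/-- The Cartesian product of two graphs is antipodal iff both factors are. -/
theorem stmt_18 {V₁ V₂ : Type*} (G : SimpleGraph V₁) (H : SimpleGraph V₂) :
    IsAntipodal (G.boxProd H) ↔ IsAntipodal G ∧ IsAntipodal H := by
  constructor
  · rintro ⟨hc, ha⟩
    have hG := hc.ofBoxProdLeft
    have hH := hc.ofBoxProdRight
    refine ⟨⟨hG, ?_⟩, ⟨hH, ?_⟩⟩
    · intro a
      obtain ⟨b⟩ : Nonempty V₂ := (nonempty_prod.1 hc.nonempty).2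
      obtain ⟨y, hy⟩ := ha (a, b)
      refine ⟨y.1, ?_⟩
      ext z
      simp only [Set.mem_univ, iff_true, gInterval, Set.mem_setOf_eq]
      have hz : (z, b) ∈ gInterval (G.boxProd H) (a, b) y := hy ▸ Set.mem_univ _
      simp only [gInterval, Set.mem_setOf_eq, dist_boxProd hG hH,
        SimpleGraph.dist_self] at hz
      omega
    · intro b
      obtain ⟨a⟩ : Nonempty V₁ := (nonempty_prod.1 hc.nonempty).1
      obtain ⟨y, hy⟩ := ha (a, b)
      refine ⟨y.2, ?_⟩
      ext z
      simp only [Set.mem_univ, iff_true, gInterval, Set.mem_setOf_eq]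
      have hz : (a, z) ∈ gInterval (G.boxProd H) (a, b) y := hy ▸ Set.mem_univ _
      simp only [gInterval, Set.mem_setOf_eq, dist_boxProd hG hH,
        SimpleGraph.dist_self] at hz
      omega
  · rintro ⟨⟨hG, haG⟩, ⟨hH, haH⟩⟩
    refine ⟨hG.boxProd hH, ?_⟩
    rintro ⟨a, b⟩
    obtain ⟨y₁, h₁⟩ := haG a
    obtain ⟨y₂, h₂⟩ := haH b
    refine ⟨(y₁, y₂), ?_⟩
    ext ⟨z₁, z₂⟩
    have e₁ : z₁ ∈ gInterval G a y₁ := h₁ ▸ Set.mem_univ _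
    have e₂ : z₂ ∈ gInterval H b y₂ := h₂ ▸ Set.mem_univ _
    simp only [gInterval, Set.mem_setOf_eq] at e₁ e₂
    simp only [Set.mem_univ, iff_true, gInterval, Set.mem_setOf_eq, dist_boxProd hG hH]
    omega
end
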